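/- arXiv:2010.10309 — 6 statements merged into one kernel-verified Lean document; each statement's English description precedes it below -/
import Mathlib

section
/- For every k ≥ 2, the k-equal-representation shortlisting rule is non-wasteful: for every shortlisting instance I = ⟨ℙ, c, B⟩ and every shortlisting profile P, either c(R(I,P)) ≥ B or R(I,P) = ⋃P. -/
open Finset

namespace PB

open scoped Classical

/-- An approval/shortlisting profile for `n` agents: each agent contributes a
finite set of (indices of) projects. Projects are identified with their indices. -/
abbrev Profile (n : ℕ) := Fin n → Finset ℕ

/-- The union `⋃ P` of all proposals in a profile. -/
def unionP {n : ℕ} (P : Profile n) : Finset ℕ := Finset.univ.sup P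

/-- Encoding of a finite set of projects; a set is lexicographically preferred
(amongst the projects on which two sets differ, the one with the lowest index
belongs to the preferred set) iff its encoding is larger. -/
noncomputable def enc (P : Finset ℕ) : ℚ := P.sum fun i => (1 / 2 : ℚ) ^ i

/-- The canonical tie-breaking rule `T` on a family of sets of projects:
the (unique) lexicographically first set of the family. -/
noncomputable def Tfam (𝔓 : Finset (Finset ℕ)) : Finset ℕ :=
  if h : ∃ P ∈ 𝔓, ∀ Q ∈ 𝔓, enc Q ≤ enc P then h.choose else ∅

/-- The `r`-least element of a finite set of projects (`r` read as "strictly before"). -/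
noncomputable def first (r : ℕ → ℕ → Prop) (P : Finset ℕ) : ℕ :=
  if h : ∃ p ∈ P, ∀ q ∈ P, q ≠ p → r p q then h.choose else 0

/-- The canonical tie-breaking rule `T` on a nonempty set of projects: least index. -/
noncomputable def Tproj (P : Finset ℕ) : ℕ := first (· < ·) P

noncomputable def greedyAux (c : ℕ → ℕ) (r : ℕ → ℕ → Prop) : ℕ → Finset ℕ → ℕ → Finset ℕ
  | 0, _, _ => ∅
  | fuel + 1, P, b =>
    if P.Nonempty then
      if c (first r P) ≤ b then
        insert (first r P) (greedyAux c r fuel (P.erase (first r P)) (b - c (first r P)))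
      else greedyAux c r fuel (P.erase (first r P)) b
    else ∅

/-- Greedy selection: examine the projects of `P` following the strict order `r`,
selecting a project iff doing so keeps the total cost within the budget `B`. -/
noncomputable def GREED (c : ℕ → ℕ) (B : ℕ) (P : Finset ℕ) (r : ℕ → ℕ → Prop) : Finset ℕ :=
  greedyAux c r P.card P B

/-- A shortlisting rule: for every number `n` of agents, cost function, budget
limit, universe `ℙ` of projects and shortlisting profile, a shortlist. -/
abbrev ShortRule := ∀ n : ℕ, (ℕ → ℕ) → ℕ → Finset ℕ → Profile n → Finset ℕ

/-- An allocation rule: for every number `n` of agents, cost function, budget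
limit, set `Sh` of shortlisted projects and approval profile, a budget allocation. -/
abbrev AllocRule := ∀ n : ℕ, (ℕ → ℕ) → ℕ → Finset ℕ → Profile n → Finset ℕ

/-- A shortlisting rule must return a subset of the union of the proposals. -/
def IsShortRule (R : ShortRule) : Prop :=
  ∀ (n : ℕ) (c : ℕ → ℕ) (B : ℕ) (ℙ : Finset ℕ) (P : Profile n),
    (∀ j, P j ⊆ ℙ) → R n c B ℙ P ⊆ unionP P

/-- An allocation rule must return a feasible budget allocation. -/
def IsAllocRule (F : AllocRule) : Prop :=
  ∀ (n : ℕ) (c : ℕ → ℕ) (B : ℕ) (Sh : Finset ℕ) (A : Profile n),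
    (∀ j, A j ⊆ Sh) → F n c B Sh A ⊆ Sh ∧ (F n c B Sh A).sum c ≤ B

/-- The nomination shortlisting rule. -/
def nomination : ShortRule := fun _ _ _ _ P => unionP P

/-- Non-wastefulness of a shortlisting rule. -/
def NonWasteful (R : ShortRule) : Prop :=
  ∀ (n : ℕ) (c : ℕ → ℕ) (B : ℕ) (ℙ : Finset ℕ) (P : Profile n),
    (∀ p ∈ ℙ, c p ≤ B) → (∀ j, P j ⊆ ℙ) →
    B ≤ (R n c B ℙ P).sum c ∨ R n c B ℙ P = unionP P

/-- A shortlist `S` is representatively dominated (given instance and profile). -/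
def RepDominated {n : ℕ} (c : ℕ → ℕ) (ℙ : Finset ℕ) (P : Profile n) (S : Finset ℕ) : Prop :=
  ∃ S' ⊆ ℙ, S'.sum c ≤ S.sum c ∧
    (∀ i, (S ∩ P i).card ≤ (S' ∩ P i).card) ∧ ∃ i, (S ∩ P i).card < (S' ∩ P i).card

/-- Representation efficiency of a shortlisting rule. -/
def RepEfficient (R : ShortRule) : Prop :=
  ∀ (n : ℕ) (c : ℕ → ℕ) (B : ℕ) (ℙ : Finset ℕ) (P : Profile n),
    (∀ p ∈ ℙ, c p ≤ B) → (∀ j, P j ⊆ ℙ) →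
    ¬ RepDominated c ℙ P (R n c B ℙ P)

/-- The representation score `Σ_i Σ_{ℓ=0}^{|P_i ∩ S|} (1/n)^ℓ`. -/
noncomputable def reprScore (n : ℕ) (P : Profile n) (S : Finset ℕ) : ℚ :=
  ∑ i, ∑ l ∈ Finset.range ((P i ∩ S).card + 1), (1 / (n : ℚ)) ^ l

/-- The `k`-equal-representation shortlisting rule. -/
noncomputable def equalRepr (k : ℕ) : ShortRule := fun n c B _ P =>
  Tfam (((unionP P).powerset).filter fun S =>
    S.sum c ≤ k * B ∧
    ∀ S' ∈ (unionP P).powerset, S'.sum c ≤ k * B → reprScore n P S' ≤ reprScore n P S)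

/-- The geometric median of a set of projects w.r.t. a distance `δ`. -/
noncomputable def med (δ : ℕ → ℕ → ℝ) (V : Finset ℕ) : ℕ :=
  Tproj (V.filter fun p => ∀ q ∈ V, V.sum (fun x => δ p x) ≤ V.sum (fun x => δ q x))

def IsPartition (V : Finset (Finset ℕ)) (P : Finset ℕ) : Prop :=
  (∀ v ∈ V, v.Nonempty) ∧ V.sup id = P ∧ ∀ v ∈ V, ∀ w ∈ V, v ≠ w → Disjoint v w

/-- `(k, ℓ)`-Voronoï partitions w.r.t. `δ`. -/
def IsVoronoi (δ : ℕ → ℕ → ℝ) (c : ℕ → ℕ) (B k : ℕ) (ℓ : ℝ)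
    (V : Finset (Finset ℕ)) (P : Finset ℕ) : Prop :=
  IsPartition V P ∧ (V.sum fun v => c (med δ v)) ≤ k * B ∧
  ∀ v ∈ V, ∀ p ∈ v,
    (∀ w ∈ V, w ≠ v → δ p (med δ v) ≤ δ p (med δ w)) ∧ δ p (med δ v) ≤ ℓ

/-- The smallest `ℓ` such that a `(k, ℓ)`-Voronoï partition of `P` exists. -/
noncomputable def lstar (δ : ℕ → ℕ → ℝ) (c : ℕ → ℕ) (B k : ℕ) (P : Finset ℕ) : ℝ :=
  sInf {ℓ : ℝ | ∃ V : Finset (Finset ℕ), IsVoronoi δ c B k ℓ V P}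

/-- The `k`-median shortlisting rule w.r.t. the distance `δ`. -/
noncomputable def kMedian (δ : ℕ → ℕ → ℝ) (k : ℕ) : ShortRule := fun _ c B _ P =>
  Tfam ((((unionP P).powerset.powerset).filter fun V =>
    IsVoronoi δ c B k (lstar δ c B k (unionP P)) V (unionP P)).image fun V => V.image (med δ))

/-- `δ` is a metric (on the universe of conceivable projects). -/
def IsMetric (δ : ℕ → ℕ → ℝ) : Prop :=
  (∀ p q, δ p q = 0 ↔ p = q) ∧ (∀ p q, δ p q = δ q p) ∧ ∀ p q r, δ p r ≤ δ p q + δ q r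

/-- The approval score of project `p` in profile `A`. -/
def appScore {n : ℕ} (A : Profile n) (p : ℕ) : ℕ :=
  (Finset.univ.filter fun i => p ∈ A i).card

/-- The greedy-approval allocation rule. -/
noncomputable def greedyApproval : AllocRule := fun _ c B Sh A =>
  GREED c B Sh fun p q => appScore A q < appScore A p ∨ (appScore A p = appScore A q ∧ p < q)

/-- The approval-maximising allocation rule (canonical tie-breaking). -/
noncomputable def approvalMax : AllocRule := fun _ c B Sh A =>
  Tfam ((Sh.powerset).filter fun S =>
    S.sum c ≤ B ∧ ∀ S' ∈ Sh.powerset, S'.sum c ≤ B → S'.sum (appScore A) ≤ S.sum (appScore A))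

/-- `A` is an exhaustive budget allocation for the instance `⟨Sh, c, B⟩`. -/
def ExhaustiveAlloc (c : ℕ → ℕ) (B : ℕ) (Sh A : Finset ℕ) : Prop :=
  A ⊆ Sh ∧ A.sum c ≤ B ∧ ∀ p ∈ Sh, p ∉ A → ¬ (A.sum c + c p ≤ B)

/-- An allocation rule is exhaustive if it always returns an exhaustive allocation. -/
def ExhaustiveRule (F : AllocRule) : Prop :=
  ∀ (n : ℕ) (c : ℕ → ℕ) (B : ℕ) (Sh : Finset ℕ) (A : Profile n),
    (∀ j, A j ⊆ Sh) → ExhaustiveAlloc c B Sh (F n c B Sh A)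

/-- Unanimity of an allocation rule. -/
def Unanimous (F : AllocRule) : Prop :=
  ∀ (n : ℕ) (c : ℕ → ℕ) (B : ℕ) (Sh : Finset ℕ) (a : Finset ℕ),
    a ⊆ Sh → a.sum c ≤ B → a ⊆ F n c B Sh (fun _ => a)

/-- Strong unanimity of an allocation rule. -/
def StronglyUnanimous (F : AllocRule) : Prop :=
  ∀ (n : ℕ) (c : ℕ → ℕ) (B : ℕ) (Sh : Finset ℕ) (i : Fin n) (a : Finset ℕ) (A : Profile n),
    3 ≤ n → a ⊆ Sh → a.sum c ≤ B → (∀ j, j ≠ i → A j = a) → a ⊆ F n c B Sh A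

/-- A preference model: given the cost function and an ideal set, the utility
of a budget allocation.  `overlapU` and `costU` are the two models used. -/
abbrev PrefModel := (ℕ → ℕ) → Finset ℕ → Finset ℕ → ℕ

def overlapU : PrefModel := fun _ P A => (A ∩ P).card
def costU : PrefModel := fun c P A => (A ∩ P).sum c

/-- Budget allocations reachable by agent `i` by changing her own ballot. -/
noncomputable def reachable (n : ℕ) (c : ℕ → ℕ) (B : ℕ) (F : AllocRule)
    (Sh : Finset ℕ) (A : Profile n) (i : Fin n) : Finset (Finset ℕ) :=
  (Sh.powerset).image fun b => F n c B Sh (Function.update A i b)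

/-- The best response `A*_i(I, A, F)` of agent `i` (with preference order `r`). -/
noncomputable def Astar (U : PrefModel) (n : ℕ) (c : ℕ → ℕ) (B : ℕ) (F : AllocRule)
    (r : ℕ → ℕ → Prop) (Sh : Finset ℕ) (A : Profile n) (i : Fin n) : Finset ℕ :=
  Tfam ((reachable n c B F Sh A i).filter fun X =>
    ∀ Y ∈ reachable n c B F Sh A i, U c (GREED c B Sh r) Y ≤ U c (GREED c B Sh r) X)

/-- `F*(I, A)`: the outcome after agent `i` best-responds to profile `A`. -/
noncomputable def Fstar (U : PrefModel) (n : ℕ) (c : ℕ → ℕ) (B : ℕ) (F : AllocRule)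
    (r : ℕ → ℕ → Prop) (Sh : Finset ℕ) (A : Profile n) (i : Fin n) : Finset ℕ :=
  F n c B Sh (Function.update A i (Astar U n c B F r Sh A i))

/-- `Pi'` is a successful pessimistic manipulation for agent `i` (base profile `P`). -/
def SuccPess (U : PrefModel) (R : ShortRule) (F : AllocRule) (n : ℕ) (c : ℕ → ℕ) (B : ℕ)
    (ℙ : Finset ℕ) (prefs : Fin n → ℕ → ℕ → Prop) (P : Profile n) (i : Fin n)
    (Pi' : Finset ℕ) : Prop :=
  let Sh := R n c B ℙ P
  let Sh' := R n c B ℙ (Function.update P i Pi')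
  let tp := GREED c B (Sh ∪ Sh') (prefs i)
  (∀ A A' : Profile n, (∀ j, A j ⊆ Sh) → (∀ j, A' j ⊆ Sh') →
      U c tp (Fstar U n c B F (prefs i) Sh A i) ≤ U c tp (Fstar U n c B F (prefs i) Sh' A' i)) ∧
  ∃ A A' : Profile n, (∀ j, A j ⊆ Sh) ∧ (∀ j, A' j ⊆ Sh') ∧
      U c tp (Fstar U n c B F (prefs i) Sh A i) < U c tp (Fstar U n c B F (prefs i) Sh' A' i)

/-- `Pi'` is a successful optimistic manipulation for agent `i` (base profile `P`). -/
def SuccOpt (U : PrefModel) (R : ShortRule) (F : AllocRule) (n : ℕ) (c : ℕ → ℕ) (B : ℕ)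
    (ℙ : Finset ℕ) (prefs : Fin n → ℕ → ℕ → Prop) (P : Profile n) (i : Fin n)
    (Pi' : Finset ℕ) : Prop :=
  let Sh := R n c B ℙ P
  let Sh' := R n c B ℙ (Function.update P i Pi')
  let tp := GREED c B (Sh ∪ Sh') (prefs i)
  ∃ A A' : Profile n, (∀ j, A j ⊆ Sh) ∧ (∀ j, A' j ⊆ Sh') ∧
      U c tp (Fstar U n c B F (prefs i) Sh A i) < U c tp (Fstar U n c B F (prefs i) Sh' A' i)

/-- `Pi'` is a successful anticipative manipulation for agent `i` (base profile `P`). -/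
def SuccAnt (U : PrefModel) (R : ShortRule) (F : AllocRule) (n : ℕ) (c : ℕ → ℕ) (B : ℕ)
    (ℙ : Finset ℕ) (prefs : Fin n → ℕ → ℕ → Prop) (P : Profile n) (i : Fin n)
    (Pi' : Finset ℕ) : Prop :=
  let Sh := R n c B ℙ P
  let Sh' := R n c B ℙ (Function.update P i Pi')
  let tp := GREED c B (Sh ∪ Sh') (prefs i)
  U c tp (Fstar U n c B F (prefs i) Sh (fun j => GREED c B Sh (prefs j)) i)
    < U c tp (Fstar U n c B F (prefs i) Sh' (fun j => GREED c B Sh' (prefs j)) i)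

section FSSP

variable (U : PrefModel) (R : ShortRule) (F : AllocRule)

/-- First-stage strategyproofness, awareness-restricted, pessimistic. -/
def R_FSSP_P : Prop :=
  ∀ (n : ℕ) (c : ℕ → ℕ) (B : ℕ) (ℙ : Finset ℕ) (prefs : Fin n → ℕ → ℕ → Prop)
    (C P : Profile n) (i : Fin n) (Pi' : Finset ℕ),
    (∀ p ∈ ℙ, c p ≤ B) → (∀ j, IsStrictTotalOrder ℕ (prefs j)) →
    (∀ j, C j ⊆ ℙ) → (∀ j, P j ⊆ C j) → Pi' ⊆ C i →
    ¬ SuccPess U R F n c B ℙ prefs (Function.update P i (GREED c B (C i) (prefs i))) i Pi'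

/-- First-stage strategyproofness, awareness-restricted, optimistic. -/
def R_FSSP_O : Prop :=
  ∀ (n : ℕ) (c : ℕ → ℕ) (B : ℕ) (ℙ : Finset ℕ) (prefs : Fin n → ℕ → ℕ → Prop)
    (C P : Profile n) (i : Fin n) (Pi' : Finset ℕ),
    (∀ p ∈ ℙ, c p ≤ B) → (∀ j, IsStrictTotalOrder ℕ (prefs j)) →
    (∀ j, C j ⊆ ℙ) → (∀ j, P j ⊆ C j) → Pi' ⊆ C i →
    ¬ SuccOpt U R F n c B ℙ prefs (Function.update P i (GREED c B (C i) (prefs i))) i Pi'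

/-- First-stage strategyproofness, awareness-restricted, anticipative. -/
def R_FSSP_A : Prop :=
  ∀ (n : ℕ) (c : ℕ → ℕ) (B : ℕ) (ℙ : Finset ℕ) (prefs : Fin n → ℕ → ℕ → Prop)
    (C P : Profile n) (i : Fin n) (Pi' : Finset ℕ),
    (∀ p ∈ ℙ, c p ≤ B) → (∀ j, IsStrictTotalOrder ℕ (prefs j)) →
    (∀ j, C j ⊆ ℙ) → (∀ j, P j ⊆ C j) → Pi' ⊆ C i →
    ¬ SuccAnt U R F n c B ℙ prefs (Function.update P i (GREED c B (C i) (prefs i))) i Pi'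

/-- First-stage strategyproofness, unrestricted, pessimistic. -/
def U_FSSP_P : Prop :=
  ∀ (n : ℕ) (c : ℕ → ℕ) (B : ℕ) (ℙ : Finset ℕ) (prefs : Fin n → ℕ → ℕ → Prop)
    (C P : Profile n) (i : Fin n) (Pi' : Finset ℕ),
    (∀ p ∈ ℙ, c p ≤ B) → (∀ j, IsStrictTotalOrder ℕ (prefs j)) →
    (∀ j, C j ⊆ ℙ) → (∀ j, P j ⊆ C j) → Pi' ⊆ C i ∪ unionP P →
    ¬ SuccPess U R F n c B ℙ prefs
        (Function.update P i (GREED c B (C i ∪ unionP P) (prefs i))) i Pi'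

/-- First-stage strategyproofness, unrestricted, optimistic. -/
def U_FSSP_O : Prop :=
  ∀ (n : ℕ) (c : ℕ → ℕ) (B : ℕ) (ℙ : Finset ℕ) (prefs : Fin n → ℕ → ℕ → Prop)
    (C P : Profile n) (i : Fin n) (Pi' : Finset ℕ),
    (∀ p ∈ ℙ, c p ≤ B) → (∀ j, IsStrictTotalOrder ℕ (prefs j)) →
    (∀ j, C j ⊆ ℙ) → (∀ j, P j ⊆ C j) → Pi' ⊆ C i ∪ unionP P →
    ¬ SuccOpt U R F n c B ℙ prefs
        (Function.update P i (GREED c B (C i ∪ unionP P) (prefs i))) i Pi'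

/-- First-stage strategyproofness, unrestricted, anticipative. -/
def U_FSSP_A : Prop :=
  ∀ (n : ℕ) (c : ℕ → ℕ) (B : ℕ) (ℙ : Finset ℕ) (prefs : Fin n → ℕ → ℕ → Prop)
    (C P : Profile n) (i : Fin n) (Pi' : Finset ℕ),
    (∀ p ∈ ℙ, c p ≤ B) → (∀ j, IsStrictTotalOrder ℕ (prefs j)) →
    (∀ j, C j ⊆ ℙ) → (∀ j, P j ⊆ C j) → Pi' ⊆ C i ∪ unionP P →
    ¬ SuccAnt U R F n c B ℙ prefs
        (Function.update P i (GREED c B (C i ∪ unionP P) (prefs i))) i Pi'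

end FSSP

lemma Tfam_mem {𝔓 : Finset (Finset ℕ)} (h : 𝔓.Nonempty) : Tfam 𝔓 ∈ 𝔓 := by
  obtain ⟨P, hP, hmax⟩ := 𝔓.exists_max_image enc h
  have hex : ∃ P ∈ 𝔓, ∀ Q ∈ 𝔓, enc Q ≤ enc P := ⟨P, hP, hmax⟩
  rw [Tfam, dif_pos hex]
  exact hex.choose_spec.1

lemma geom_mono (q : ℚ) (hq : 0 ≤ q) {a b : ℕ} (hab : a ≤ b) :
    ∑ l ∈ Finset.range (a + 1), q ^ l ≤ ∑ l ∈ Finset.range (b + 1), q ^ l :=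
  Finset.sum_le_sum_of_subset_of_nonneg (Finset.range_subset_range.2 (by omega))
    (fun i _ _ => pow_nonneg hq i)

/-- For every `k ≥ 2`, the `k`-equal-representation shortlisting
rule is non-wasteful. -/
theorem equalRepr_nonWasteful :
    ∀ k : ℕ, 2 ≤ k → NonWasteful (equalRepr k) := by
  intro k hk n c B ℙ P hcB hPℙ
  set U := unionP P with hU
  set 𝔓 := (U.powerset).filter (fun S =>
    S.sum c ≤ k * B ∧ ∀ S' ∈ U.powerset, S'.sum c ≤ k * B →
      reprScore n P S' ≤ reprScore n P S) with h𝔓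
  have hne : 𝔓.Nonempty := by
    obtain ⟨S0, hS0, hmax⟩ := ((U.powerset).filter (fun S => S.sum c ≤ k * B)).exists_max_image
      (reprScore n P) ⟨∅, by simp⟩
    rw [Finset.mem_filter] at hS0
    exact ⟨S0, Finset.mem_filter.2 ⟨hS0.1, hS0.2,
      fun S' hS' hc' => hmax S' (Finset.mem_filter.2 ⟨hS', hc'⟩)⟩⟩
  have hmem : equalRepr k n c B ℙ P ∈ 𝔓 := Tfam_mem hne
  set S := equalRepr k n c B ℙ P with hS
  rw [h𝔓, Finset.mem_filter, Finset.mem_powerset] at hmem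
  obtain ⟨hSU, hSc, hSmax⟩ := hmem
  by_contra hcon
  push_neg at hcon
  obtain ⟨hlt, hne'⟩ := hcon
  obtain ⟨p, hpU, hpS⟩ := Finset.exists_of_ssubset (hSU.ssubset_of_ne hne')
  obtain ⟨i0, _, hpi0⟩ := Finset.mem_sup.1 hpU
  have hpℙ : p ∈ ℙ := hPℙ i0 hpi0
  have hcp : c p ≤ B := hcB p hpℙ
  have hinsU : insert p S ⊆ U := Finset.insert_subset hpU hSU
  have hcost : (insert p S).sum c ≤ k * B := by
    rw [Finset.sum_insert hpS]
    have h2 : c p + S.sum c ≤ 2 * B := by omega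
    calc c p + S.sum c ≤ 2 * B := h2
      _ ≤ k * B := Nat.mul_le_mul_right B hk
  have hqpos : (0 : ℚ) < 1 / (n : ℚ) := by
    have : (0 : ℚ) < (n : ℚ) := by exact_mod_cast i0.pos
    positivity
  have hstrict : reprScore n P S < reprScore n P (insert p S) := by
    unfold reprScore
    apply Finset.sum_lt_sum
    · intro i _
      exact geom_mono _ hqpos.le
        (Finset.card_le_card (Finset.inter_subset_inter le_rfl (Finset.subset_insert p S)))
    · refine ⟨i0, Finset.mem_univ i0, ?_⟩
      have heq : P i0 ∩ insert p S = insert p (P i0 ∩ S) := by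
        ext x
        simp only [Finset.mem_inter, Finset.mem_insert]
        constructor
        · rintro ⟨hx, hx' | hx'⟩
          · exact Or.inl hx'
          · exact Or.inr ⟨hx, hx'⟩
        · rintro (rfl | ⟨hx, hx'⟩)
          · exact ⟨hpi0, Or.inl rfl⟩
          · exact ⟨hx, Or.inr hx'⟩
      have hpns : p ∉ P i0 ∩ S := fun h => hpS (Finset.mem_inter.1 h).2
      rw [heq, Finset.card_insert_of_notMem hpns]
      have h1 : (0 : ℚ) < (1 / (n : ℚ)) ^ ((P i0 ∩ S).card + 1) := pow_pos hqpos _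
      have h2 := Finset.sum_range_succ (fun l => (1 / (n : ℚ)) ^ l) ((P i0 ∩ S).card + 1)
      linarith
  exact absurd (hSmax (insert p S) (Finset.mem_powerset.2 hinsU) hcost) (not_le.2 hstrict)

end PB
end

section
/- For every k ≥ 1, the k-equal-representation shortlisting rule is representatively efficient: its outcome is never representatively dominated. -/
open Finset

namespace PB

open scoped Classical

/-- For every `k ≥ 1`, the `k`-equal-representation shortlisting
rule is representatively efficient. -/
theorem equalRepr_repEfficient :
    ∀ k : ℕ, 1 ≤ k → RepEfficient (equalRepr k) := by
  intro k hk n c B ℙ P hcB hsub hdom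
  classical
  set F : Finset (Finset ℕ) := ((unionP P).powerset).filter (fun S =>
    S.sum c ≤ k * B ∧
    ∀ S' ∈ (unionP P).powerset, S'.sum c ≤ k * B →
      reprScore n P S' ≤ reprScore n P S) with hF
  have hfeas : ((unionP P).powerset.filter fun S => S.sum c ≤ k * B).Nonempty := by
    refine ⟨∅, ?_⟩
    simp
  obtain ⟨S0, hS0, hmax0⟩ := Finset.exists_max_image _ (reprScore n P) hfeas
  have hS0F : S0 ∈ F := by
    rw [hF, Finset.mem_filter]
    rw [Finset.mem_filter] at hS0
    exact ⟨hS0.1, hS0.2, fun S' hS' hc' => hmax0 S' (Finset.mem_filter.mpr ⟨hS', hc'⟩)⟩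
  have hmem : equalRepr k n c B ℙ P ∈ F := Tfam_mem ⟨S0, hS0F⟩
  rw [hF, Finset.mem_filter] at hmem
  obtain ⟨hsubU, hcost, hopt⟩ := hmem
  obtain ⟨S', hS'P, hcS', hall, i, hi⟩ := hdom
  have hnpos : 0 < n := i.pos
  have hn1 : (1 : ℚ) ≤ (n : ℚ) := by exact_mod_cast hnpos
  have hx : (0 : ℚ) < 1 / (n : ℚ) := by positivity
  have hPsub : ∀ j : Fin n, P j ⊆ unionP P := fun j => by
    rw [unionP, ← Finset.le_iff_subset]
    exact Finset.le_sup (Finset.mem_univ j)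
  set S := equalRepr k n c B ℙ P with hSdef
  set S'' := S' ∩ unionP P with hS''
  have hinter : ∀ j : Fin n, S'' ∩ P j = S' ∩ P j := by
    intro j
    rw [hS'', Finset.inter_assoc, Finset.inter_eq_right.mpr (hPsub j)]
  have hcard : ∀ j : Fin n, (P j ∩ S).card ≤ (P j ∩ S'').card := by
    intro j
    rw [Finset.inter_comm, Finset.inter_comm (P j) S'', hinter j]
    exact hall j
  have hcardi : (P i ∩ S).card < (P i ∩ S'').card := by
    rw [Finset.inter_comm, Finset.inter_comm (P i) S'', hinter i]
    exact hi
  have hcS'' : S''.sum c ≤ k * B :=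
    le_trans (le_trans (Finset.sum_le_sum_of_subset Finset.inter_subset_left) hcS') hcost
  have hle : reprScore n P S'' ≤ reprScore n P S :=
    hopt S'' (Finset.mem_powerset.mpr Finset.inter_subset_right) hcS''
  have hlt : reprScore n P S < reprScore n P S'' := by
    unfold reprScore
    apply Finset.sum_lt_sum
    · intro j _
      apply Finset.sum_le_sum_of_subset_of_nonneg
      · exact Finset.range_subset_range.mpr (Nat.succ_le_succ (hcard j))
      · intro l _ _
        positivity
    · refine ⟨i, Finset.mem_univ i, ?_⟩
      refine Finset.sum_lt_sum_of_subset
        (Finset.range_subset_range.mpr (Nat.succ_le_succ (le_of_lt hcardi)))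
        (i := (P i ∩ S).card + 1) (Finset.mem_range.mpr (by omega))
        (by simp) (by positivity) (fun l _ _ => by positivity)
  exact absurd hle (not_le.mpr hlt)

end PB
end

section
/- For every k ∈ ℕ, the k-median shortlisting rule is not representatively efficient: there exist a metric δ on the projects, a shortlisting instance I, and a shortlisting profile P such that the outcome of the k-median rule w.r.t. δ on (I, P) is representatively dominated. -/
open Finset

namespace PB

open scoped Classical

/-! ### Auxiliary lemmas for Statement 4 -/

section Stmt4Aux

lemma first_lt_eq_min' (S : Finset ℕ) (hS : S.Nonempty) :
    first (· < ·) S = S.min' hS := by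
  have hex : ∃ p ∈ S, ∀ q ∈ S, q ≠ p → p < q :=
    ⟨S.min' hS, S.min'_mem hS, fun q hq hne =>
      lt_of_le_of_ne (S.min'_le q hq) (Ne.symm hne)⟩
  rw [first, dif_pos hex]
  obtain ⟨h1, h2⟩ := hex.choose_spec
  by_contra hne
  have h3 : hex.choose < S.min' hS := h2 _ (S.min'_mem hS) (fun h => hne h.symm)
  exact absurd (S.min'_le _ h1) (not_le.mpr h3)

lemma Tproj_eq_min' (S : Finset ℕ) (hS : S.Nonempty) : Tproj S = S.min' hS :=
  first_lt_eq_min' S hS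

lemma medFilter_nonempty (δ : ℕ → ℕ → ℝ) (v : Finset ℕ) (hv : v.Nonempty) :
    (v.filter fun p => ∀ q ∈ v, v.sum (fun x => δ p x) ≤ v.sum (fun x => δ q x)).Nonempty := by
  obtain ⟨p, hp, hmin⟩ := v.exists_min_image (fun p => v.sum (fun x => δ p x)) hv
  exact ⟨p, Finset.mem_filter.mpr ⟨hp, hmin⟩⟩

lemma med_mem (δ : ℕ → ℕ → ℝ) (v : Finset ℕ) (hv : v.Nonempty) : med δ v ∈ v := by
  have h := medFilter_nonempty δ v hv
  have h2 : med δ v ∈ v.filter fun p => ∀ q ∈ v, v.sum (fun x => δ p x) ≤ v.sum (fun x => δ q x) := by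
    rw [med, Tproj_eq_min' _ h]; exact Finset.min'_mem _ h
  exact (Finset.mem_filter.mp h2).1

lemma med_singleton (δ : ℕ → ℕ → ℝ) (x : ℕ) : med δ {x} = x := by
  have h : ({x} : Finset ℕ).filter (fun p => ∀ q ∈ ({x} : Finset ℕ),
      ({x} : Finset ℕ).sum (fun y => δ p y) ≤ ({x} : Finset ℕ).sum (fun y => δ q y)) = {x} := by
    apply Finset.filter_eq_self.mpr
    intro p hp q hq
    rw [Finset.mem_singleton] at hp hq
    rw [hp, hq]
  rw [med, h, Tproj_eq_min' _ ⟨x, Finset.mem_singleton_self x⟩, Finset.min'_singleton]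

lemma Tfam_singleton (A : Finset ℕ) : Tfam {A} = A := by
  have hex : ∃ P ∈ ({A} : Finset (Finset ℕ)), ∀ Q ∈ ({A} : Finset (Finset ℕ)), enc Q ≤ enc P :=
    ⟨A, Finset.mem_singleton_self A, fun Q hQ => by rw [Finset.mem_singleton.mp hQ]⟩
  rw [Tfam, dif_pos hex]
  exact Finset.mem_singleton.mp hex.choose_spec.1

lemma Tfam_empty : Tfam ∅ = ∅ := by
  rw [Tfam, dif_neg]; simp

end Stmt4Aux
section Stmt4Pairs

/-- Distance: 0 if equal, 1 if in the same pair `{2j, 2j+1}`, else 10. -/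
noncomputable def dpair (p q : ℕ) : ℝ := if p = q then 0 else if p / 2 = q / 2 then 1 else 10

lemma dpair_nonneg (p q : ℕ) : 0 ≤ dpair p q := by
  unfold dpair; split_ifs <;> norm_num

lemma dpair_ge_one (p q : ℕ) (h : p ≠ q) : 1 ≤ dpair p q := by
  unfold dpair; rw [if_neg h]; split_ifs <;> norm_num

lemma dpair_eq_ten (p q : ℕ) (h : p / 2 ≠ q / 2) : dpair p q = 10 := by
  unfold dpair
  rw [if_neg (fun hpq => h (by rw [hpq])), if_neg h]

lemma dpair_le_one (p q : ℕ) (h : p / 2 = q / 2) : dpair p q ≤ 1 := by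
  unfold dpair; split_ifs with h1 h2 <;> first | norm_num | exact absurd h h2

lemma div_eq_of_dpair_le_one (p q : ℕ) (h : dpair p q ≤ 1) : p / 2 = q / 2 := by
  by_contra hne
  rw [dpair_eq_ten p q hne] at h; norm_num at h

lemma eq_of_dpair_lt_one (p q : ℕ) (h : dpair p q < 1) : p = q := by
  by_contra hne
  exact absurd h (not_lt.mpr (dpair_ge_one p q hne))

lemma dpair_metric : IsMetric dpair := by
  refine ⟨fun p q => ?_, fun p q => ?_, fun p q r => ?_⟩
  · unfold dpair; split_ifs with h1 h2 <;> norm_num <;> exact h1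
  · unfold dpair
    rcases eq_or_ne p q with h | h
    · simp [h]
    · rw [if_neg h, if_neg h.symm]
      rcases eq_or_ne (p / 2) (q / 2) with h2 | h2
      · rw [if_pos h2, if_pos h2.symm]
      · rw [if_neg h2, if_neg (Ne.symm h2)]
  · rcases eq_or_ne p r with hpr | hpr
    · have : dpair p r = 0 := by unfold dpair; rw [if_pos hpr]
      rw [this]
      exact add_nonneg (dpair_nonneg p q) (dpair_nonneg q r)
    · rcases eq_or_ne q p with hqp | hqp
      · have h0 : dpair p q = 0 := by unfold dpair; rw [if_pos hqp.symm]
        have h1 : dpair q r = dpair p r := by rw [hqp]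
        rw [h0, h1, zero_add]
      · rcases eq_or_ne q r with hqr | hqr
        · have h0 : dpair q r = 0 := by unfold dpair; rw [if_pos hqr]
          have h1 : dpair p q = dpair p r := by rw [hqr]
          rw [h0, h1, add_zero]
        · rcases eq_or_ne (p / 2) (r / 2) with h2 | h2
          · have := dpair_le_one p r h2
            have := dpair_ge_one p q (Ne.symm hqp)
            have := dpair_nonneg q r
            linarith
          · have hle : dpair p r = 10 := dpair_eq_ten p r h2
            have h3 : p / 2 ≠ q / 2 ∨ q / 2 ≠ r / 2 := by
              by_contra hc
              push_neg at hc
              exact h2 (hc.1.trans hc.2)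
            rcases h3 with h3 | h3
            · have := dpair_eq_ten p q h3
              have := dpair_nonneg q r
              linarith
            · have := dpair_eq_ten q r h3
              have := dpair_nonneg p q
              linarith

/-- The pair (city) of index `j`. -/
def pairF (j : ℕ) : Finset ℕ := {2*j, 2*j+1}

lemma mem_pairF (p j : ℕ) : p ∈ pairF j ↔ p / 2 = j := by
  simp only [pairF, Finset.mem_insert, Finset.mem_singleton]
  omega

lemma pairF_injective : Function.Injective pairF := by
  intro a b h
  have h1 : 2*a ∈ pairF b := h ▸ ((mem_pairF (2*a) a).mpr (by omega))
  rw [mem_pairF] at h1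
  omega

lemma med_dpair_pairF (j : ℕ) : med dpair (pairF j) = 2*j := by
  have hne : 2*j ≠ 2*j+1 := by omega
  have hma : 2*j ∈ pairF j := (mem_pairF _ _).mpr (by omega)
  have hmb : 2*j+1 ∈ pairF j := (mem_pairF _ _).mpr (by omega)
  have hd1 : dpair (2*j) (2*j+1) = 1 := by
    unfold dpair; rw [if_neg hne, if_pos (by omega)]
  have hd2 : dpair (2*j+1) (2*j) = 1 := by
    unfold dpair; rw [if_neg (by omega), if_pos (by omega)]
  have hd0 : ∀ x, dpair x x = 0 := fun x => by unfold dpair; rw [if_pos rfl]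
  have hsum : ∀ p ∈ pairF j, (pairF j).sum (fun x => dpair p x) = 1 := by
    intro p hp
    rw [mem_pairF] at hp
    have : p = 2*j ∨ p = 2*j+1 := by omega
    rcases this with rfl | rfl <;>
      rw [show pairF j = {2*j, 2*j+1} from rfl, Finset.sum_pair hne]
    · rw [hd0, hd1, zero_add]
    · rw [hd2, hd0, add_zero]
  have hfil : (pairF j).filter (fun p => ∀ q ∈ pairF j,
      (pairF j).sum (fun x => dpair p x) ≤ (pairF j).sum (fun x => dpair q x)) = pairF j := by
    apply Finset.filter_eq_self.mpr
    intro p hp q hq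
    rw [hsum p hp, hsum q hq]
  have hne' : (pairF j).Nonempty := ⟨2*j, hma⟩
  rw [med, hfil, Tproj_eq_min' _ hne']
  have h1 := (pairF j).min'_mem hne'
  have h2 := (pairF j).min'_le (2*j) hma
  rw [mem_pairF] at h1
  omega

end Stmt4Pairs
section Stmt4Main

lemma Vstar_voronoi (k : ℕ) (hk : 1 ≤ k) :
    IsVoronoi dpair (fun _ => 1) 1 k 1 ((Finset.range k).image pairF) (Finset.range (2*k)) := by
  refine ⟨⟨?_, ?_, ?_⟩, ?_, ?_⟩
  · rintro v hv
    obtain ⟨j, _, rfl⟩ := Finset.mem_image.mp hv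
    exact ⟨2*j, (mem_pairF _ _).mpr (by omega)⟩
  · ext x
    rw [Finset.mem_sup, Finset.mem_range]
    constructor
    · rintro ⟨v, hv, hx⟩
      obtain ⟨j, hj, rfl⟩ := Finset.mem_image.mp hv
      rw [Finset.mem_range] at hj
      have := (mem_pairF x j).mp hx
      omega
    · intro hx
      refine ⟨pairF (x / 2), Finset.mem_image_of_mem _ (Finset.mem_range.mpr (by omega)), ?_⟩
      exact (mem_pairF _ _).mpr rfl
  · rintro v hv w hw hvw
    obtain ⟨a, _, rfl⟩ := Finset.mem_image.mp hv
    obtain ⟨b, _, rfl⟩ := Finset.mem_image.mp hw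
    have hab : a ≠ b := fun h => hvw (by rw [h])
    rw [Finset.disjoint_left]
    intro x hxa hxb
    rw [mem_pairF] at hxa hxb
    omega
  · have : ((Finset.range k).image pairF).sum (fun v => (fun _ => 1) (med dpair v))
        = ((Finset.range k).image pairF).card := by
      simp
    rw [this, Finset.card_image_of_injective _ pairF_injective, Finset.card_range]
    omega
  · intro v hv p hp
    obtain ⟨j, hj, rfl⟩ := Finset.mem_image.mp hv
    rw [med_dpair_pairF]
    have hpj : p / 2 = j := (mem_pairF _ _).mp hp
    constructor
    · intro w hw hne
      obtain ⟨j', _, rfl⟩ := Finset.mem_image.mp hw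
      rw [med_dpair_pairF]
      have hjj : j' ≠ j := fun h => hne (by rw [h])
      have h10 : dpair p (2*j') = 10 := dpair_eq_ten _ _ (by omega)
      have hle := dpair_le_one p (2*j) (by omega)
      rw [h10]; linarith
    · exact dpair_le_one p (2*j) (by omega)

lemma voronoi_lb (k : ℕ) (hk : 1 ≤ k) (ℓ : ℝ) (V : Finset (Finset ℕ))
    (hV : IsVoronoi dpair (fun _ => 1) 1 k ℓ V (Finset.range (2*k))) : 1 ≤ ℓ := by
  by_contra hlt
  push_neg at hlt
  obtain ⟨⟨hne, hsup, _⟩, hbud, hvor⟩ := hV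
  have hsing : ∀ v ∈ V, ∀ p ∈ v, p = med dpair v := by
    intro v hv p hp
    have h := (hvor v hv p hp).2
    exact eq_of_dpair_lt_one _ _ (lt_of_le_of_lt h hlt)
  have hsub : (Finset.range (2*k)).image (fun x => ({x} : Finset ℕ)) ⊆ V := by
    intro s hs
    obtain ⟨x, hx, rfl⟩ := Finset.mem_image.mp hs
    have hxs : x ∈ V.sup id := by rw [hsup]; exact hx
    obtain ⟨v, hv, hxv⟩ := Finset.mem_sup.mp hxs
    have hveq : v = {x} := by
      apply Finset.eq_singleton_iff_unique_mem.mpr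
      exact ⟨hxv, fun y hy => by rw [hsing v hv y hy, ← hsing v hv x hxv]⟩
    rwa [← hveq]
  have h1 : 2*k ≤ V.card := by
    have hinj : Function.Injective (fun x : ℕ => ({x} : Finset ℕ)) := by
      intro a b h
      simpa using h
    calc 2*k = ((Finset.range (2*k)).image (fun x => ({x} : Finset ℕ))).card := by
          rw [Finset.card_image_of_injective _ hinj, Finset.card_range]
      _ ≤ V.card := Finset.card_le_card hsub
  have h2 : V.card ≤ k := by
    have : V.sum (fun v => (fun _ : ℕ => 1) (med dpair v)) = V.card := by simp
    omega
  omega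

lemma lstar_eq (k : ℕ) (hk : 1 ≤ k) :
    lstar dpair (fun _ => 1) 1 k (Finset.range (2*k)) = 1 := by
  apply IsLeast.csInf_eq
  constructor
  · exact ⟨_, Vstar_voronoi k hk⟩
  · rintro ℓ ⟨V, hV⟩
    exact voronoi_lb k hk ℓ V hV

lemma voronoi_image_med (k : ℕ) (hk : 1 ≤ k) (V : Finset (Finset ℕ))
    (hV : IsVoronoi dpair (fun _ => 1) 1 k 1 V (Finset.range (2*k))) :
    V.image (med dpair) = (Finset.range k).image (fun j => 2*j) := by
  obtain ⟨⟨hne, hsup, hdisj⟩, hbud, hvor⟩ := hV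
  have hsub : ∀ v ∈ V, ∀ p ∈ v, p / 2 = med dpair v / 2 := by
    intro v hv p hp
    exact div_eq_of_dpair_le_one _ _ (hvor v hv p hp).2
  have hcard : V.card ≤ k := by
    have : V.sum (fun v => (fun _ : ℕ => 1) (med dpair v)) = V.card := by simp
    omega
  set f : Finset ℕ → ℕ := fun v => med dpair v / 2 with hf
  have hrange : Finset.range k ⊆ V.image f := by
    intro j hj
    have hjk := Finset.mem_range.mp hj
    have hmem : 2*j ∈ V.sup id := by rw [hsup]; exact Finset.mem_range.mpr (by omega)
    obtain ⟨v, hv, hpv⟩ := Finset.mem_sup.mp hmem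
    refine Finset.mem_image.mpr ⟨v, hv, ?_⟩
    have := hsub v hv _ hpv
    simp only [hf]
    omega
  have hcard2 : (V.image f).card = V.card := by
    have h1 : k ≤ (V.image f).card :=
      (Finset.card_range k) ▸ Finset.card_le_card hrange
    have h2 := Finset.card_image_le (s := V) (f := f)
    omega
  have hinj : Set.InjOn f V := Finset.card_image_iff.mp hcard2
  have himageq : V.image f = Finset.range k := by
    symm
    apply Finset.eq_of_subset_of_card_le hrange
    rw [hcard2, Finset.card_range]
    exact hcard
  have hpairs : ∀ v ∈ V, v = pairF (f v) := by
    intro v hv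
    have hfv : f v ∈ Finset.range k := himageq ▸ Finset.mem_image_of_mem f hv
    have hjk := Finset.mem_range.mp hfv
    apply Finset.Subset.antisymm
    · intro p hp
      rw [mem_pairF]
      exact hsub v hv p hp
    · intro p hp
      rw [mem_pairF] at hp
      have hpU : p ∈ V.sup id := by rw [hsup]; exact Finset.mem_range.mpr (by omega)
      obtain ⟨w, hw, hpw⟩ := Finset.mem_sup.mp hpU
      have hfw : f w = f v := by
        have := hsub w hw p hpw
        simp only [hf] at *
        omega
      rwa [hinj hw hv hfw] at hpw
  ext x
  simp only [Finset.mem_image]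
  constructor
  · rintro ⟨v, hv, rfl⟩
    have hfv : f v ∈ Finset.range k := himageq ▸ Finset.mem_image_of_mem f hv
    refine ⟨f v, hfv, ?_⟩
    conv_rhs => rw [hpairs v hv]
    rw [med_dpair_pairF]
  · rintro ⟨j, hj, rfl⟩
    have : j ∈ V.image f := himageq ▸ hj
    obtain ⟨v, hv, hfv⟩ := Finset.mem_image.mp this
    refine ⟨v, hv, ?_⟩
    rw [hpairs v hv, hfv, med_dpair_pairF]

end Stmt4Main
section Stmt4Final

lemma kMedian_outcome (k : ℕ) (hk : 1 ≤ k) (n : ℕ) (ℙ : Finset ℕ) (P : Profile n)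
    (hU : unionP P = Finset.range (2*k)) :
    kMedian dpair k n (fun _ => 1) 1 ℙ P = (Finset.range k).image (fun j => 2*j) := by
  rw [kMedian]
  have hfam : ((((unionP P).powerset.powerset).filter fun V =>
      IsVoronoi dpair (fun _ => 1) 1 k (lstar dpair (fun _ => 1) 1 k (unionP P)) V (unionP P)).image
      fun V => V.image (med dpair)) = {(Finset.range k).image (fun j => 2*j)} := by
    rw [hU, lstar_eq k hk]
    ext S
    simp only [Finset.mem_image, Finset.mem_filter, Finset.mem_singleton]
    constructor
    · rintro ⟨V, ⟨_, hV⟩, rfl⟩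
      exact voronoi_image_med k hk V hV
    · rintro rfl
      refine ⟨(Finset.range k).image pairF, ⟨?_, Vstar_voronoi k hk⟩, ?_⟩
      · rw [Finset.mem_powerset]
        intro v hv
        rw [Finset.mem_powerset]
        obtain ⟨j, hj, rfl⟩ := Finset.mem_image.mp hv
        rw [Finset.mem_range] at hj
        intro p hp
        rw [mem_pairF] at hp
        exact Finset.mem_range.mpr (by omega)
      · exact voronoi_image_med k hk _ (Vstar_voronoi k hk)
  rw [hfam, Tfam_singleton]

/-- Distance for the `k = 0` case: the discrete metric. -/
noncomputable def ddisc (p q : ℕ) : ℝ := if p = q then 0 else 1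

lemma ddisc_metric : IsMetric ddisc := by
  refine ⟨fun p q => ?_, fun p q => ?_, fun p q r => ?_⟩
  · unfold ddisc; split_ifs with h1 <;> norm_num <;> exact h1
  · unfold ddisc
    rcases eq_or_ne p q with h | h
    · simp [h]
    · rw [if_neg h, if_neg h.symm]
  · unfold ddisc
    split_ifs <;> norm_num <;> omega

lemma med_ddisc_pair01 : med ddisc ({0, 1} : Finset ℕ) = 0 := by
  have hne : (0 : ℕ) ≠ 1 := by omega
  have hsum : ∀ p ∈ ({0,1} : Finset ℕ),
      ({0,1} : Finset ℕ).sum (fun x => ddisc p x) = 1 := by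
    intro p hp
    rw [Finset.sum_pair hne]
    simp only [Finset.mem_insert, Finset.mem_singleton] at hp
    rcases hp with rfl | rfl <;> simp [ddisc]
  have hfil : ({0,1} : Finset ℕ).filter (fun p => ∀ q ∈ ({0,1} : Finset ℕ),
      ({0,1} : Finset ℕ).sum (fun x => ddisc p x) ≤ ({0,1} : Finset ℕ).sum (fun x => ddisc q x))
      = {0,1} := by
    ext p
    simp only [Finset.mem_filter]
    exact ⟨fun h => h.1, fun hp => ⟨hp, fun q hq => by rw [hsum p hp, hsum q hq]⟩⟩
  have hne' : ({0,1} : Finset ℕ).Nonempty := ⟨0, by simp⟩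
  rw [med, Finset.filter_true_of_mem (fun p hp q hq => by rw [hsum p hp, hsum q hq]), Tproj_eq_min' _ hne']
  have h1 := ({0,1} : Finset ℕ).min'_mem hne'
  have h2 := ({0,1} : Finset ℕ).min'_le 0 (by simp)
  simp only [Finset.mem_insert, Finset.mem_singleton] at h1
  omega

lemma kMedian_zero_outcome (n : ℕ) (ℙ : Finset ℕ) (P : Profile n)
    (hU : unionP P = ({0, 1} : Finset ℕ)) :
    kMedian ddisc 0 n (fun p => if p = 0 then 1 else 0) 1 ℙ P = ∅ := by
  rw [kMedian]
  have hnov : ∀ ℓ V, ¬ IsVoronoi ddisc (fun p => if p = 0 then 1 else 0) 1 0 ℓ V (unionP P) := by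
    intro ℓ V hV
    obtain ⟨⟨hne, hsup, _⟩, hbud, _⟩ := hV
    rw [hU] at hsup
    have h0 : (0 : ℕ) ∈ V.sup id := by rw [hsup]; simp
    obtain ⟨v, hv, h0v⟩ := Finset.mem_sup.mp h0
    have hvsub : v ⊆ ({0,1} : Finset ℕ) := by
      rw [← hsup]
      intro x hx
      exact Finset.mem_sup.mpr ⟨v, hv, hx⟩
    have hmed : med ddisc v = 0 := by
      rcases Finset.decidableMem 1 v with h1 | h1
      · have : v = {0} := by
          apply Finset.Subset.antisymm
          · intro x hx
            have := hvsub hx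
            simp only [Finset.mem_insert, Finset.mem_singleton] at this ⊢
            rcases this with rfl | rfl
            · rfl
            · exact absurd hx h1
          · intro x hx
            rw [Finset.mem_singleton] at hx
            rw [hx]; exact h0v
        rw [this, med_singleton]
      · have : v = ({0,1} : Finset ℕ) := by
          apply Finset.Subset.antisymm hvsub
          intro x hx
          simp only [Finset.mem_insert, Finset.mem_singleton] at hx
          rcases hx with rfl | rfl
          · exact h0v
          · exact h1
        rw [this, med_ddisc_pair01]
    have h1le : 1 ≤ V.sum (fun v => (fun p => if p = 0 then 1 else 0) (med ddisc v)) := by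
      have : (fun p : ℕ => if p = 0 then 1 else 0) (med ddisc v) = 1 := by
        simp [hmed]
      calc 1 = (fun p : ℕ => if p = 0 then 1 else 0) (med ddisc v) := this.symm
        _ ≤ _ := Finset.single_le_sum
          (f := fun w => (fun p : ℕ => if p = 0 then 1 else 0) (med ddisc w))
          (fun _ _ => Nat.zero_le _) hv
    omega
  have hfil : (((unionP P).powerset.powerset).filter fun V =>
      IsVoronoi ddisc (fun p => if p = 0 then 1 else 0) 1 0
        (lstar ddisc (fun p => if p = 0 then 1 else 0) 1 0 (unionP P)) V (unionP P)) = ∅ := by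
    apply Finset.filter_eq_empty_iff.mpr
    intro V _
    exact hnov _ V
  rw [hfil, Finset.image_empty, Tfam_empty]

end Stmt4Final
lemma unionP_pairs (k : ℕ) (hk : 1 ≤ k) :
    unionP (fun i : Fin (2*k) => if (i : ℕ) = 0 then ({0,1} : Finset ℕ)
      else if (i : ℕ) = 1 then {1} else {(i : ℕ)}) = Finset.range (2*k) := by
  ext x
  rw [unionP, Finset.mem_sup, Finset.mem_range]
  constructor
  · rintro ⟨i, _, hx⟩
    have hi := i.isLt
    split_ifs at hx <;> simp only [Finset.mem_insert, Finset.mem_singleton] at hx <;> omega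
  · intro hx
    by_cases h0 : x = 0
    · refine ⟨⟨0, by omega⟩, Finset.mem_univ _, ?_⟩
      simp [h0]
    · by_cases h1 : x = 1
      · refine ⟨⟨1, by omega⟩, Finset.mem_univ _, ?_⟩
        have : ((⟨1, by omega⟩ : Fin (2*k)) : ℕ) = 1 := rfl
        rw [this]
        simp [h1]
      · refine ⟨⟨x, hx⟩, Finset.mem_univ _, ?_⟩
        have : ((⟨x, hx⟩ : Fin (2*k)) : ℕ) = x := rfl
        rw [this, if_neg h0, if_neg h1]
        exact Finset.mem_singleton_self x

/-- For every `k`, the `k`-median shortlisting rule is not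
representatively efficient: some metric, instance and profile witness a
representatively dominated outcome. -/
theorem kMedian_not_repEfficient :
    ∀ k : ℕ, ∃ δ : ℕ → ℕ → ℝ, IsMetric δ ∧
      ∃ (n : ℕ) (c : ℕ → ℕ) (B : ℕ) (ℙ : Finset ℕ) (P : Profile n),
        (∀ p ∈ ℙ, c p ≤ B) ∧ (∀ j, P j ⊆ ℙ) ∧
        RepDominated c ℙ P (kMedian δ k n c B ℙ P) := by
  intro k
  rcases Nat.eq_zero_or_pos k with rfl | hk
  · -- k = 0
    refine ⟨ddisc, ddisc_metric, 1, (fun p => if p = 0 then 1 else 0), 1, {0,1},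
      (fun _ => {0,1}), ?_, fun j => Finset.Subset.refl _, ?_⟩
    · intro p _
      dsimp only
      split_ifs <;> omega
    · have hU : unionP (n := 1) (fun _ => ({0,1} : Finset ℕ)) = {0,1} :=
        Finset.sup_const Finset.univ_nonempty _
      rw [kMedian_zero_outcome 1 {0,1} _ hU]
      refine ⟨{1}, ?_, ?_, ?_, ?_⟩
      · intro x hx
        rw [Finset.mem_singleton] at hx
        simp [hx]
      · simp
      · intro i
        simp
      · refine ⟨0, ?_⟩
        have : ({1} : Finset ℕ) ∩ {0,1} = {1} := by
          ext z
          simp only [Finset.mem_inter, Finset.mem_insert, Finset.mem_singleton]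
          omega
        simp [this]
  · -- k ≥ 1
    set E : Finset ℕ := (Finset.range k).image (fun j => 2*j) with hE
    have h0E : 0 ∈ E := Finset.mem_image.mpr ⟨0, Finset.mem_range.mpr hk, rfl⟩
    have h1E : 1 ∉ E := by
      intro h
      obtain ⟨j, _, hj⟩ := Finset.mem_image.mp h
      omega
    have hmemE : ∀ x, x ∈ E ↔ ∃ j < k, x = 2*j := by
      intro x
      simp only [hE, Finset.mem_image, Finset.mem_range]
      constructor
      · rintro ⟨j, hj, rfl⟩; exact ⟨j, hj, rfl⟩
      · rintro ⟨j, hj, rfl⟩; exact ⟨j, hj, rfl⟩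
    have hcardE : E.card = k := by
      rw [hE, Finset.card_image_of_injective _ (fun a b h => by omega), Finset.card_range]
    set S' : Finset ℕ := insert 1 (E.erase 0) with hS'
    have hmemS' : ∀ x, x ∈ S' ↔ x = 1 ∨ (x ∈ E ∧ x ≠ 0) := by
      intro x
      simp only [hS', Finset.mem_insert, Finset.mem_erase]
      tauto
    have h1nm : 1 ∉ E.erase 0 := fun h => h1E (Finset.mem_of_mem_erase h)
    have hcardS' : S'.card = k := by
      rw [hS', Finset.card_insert_of_notMem h1nm, Finset.card_erase_of_mem h0E, hcardE]
      omega
    have hsum1 : ∀ S : Finset ℕ, S.sum (fun _ => (1:ℕ)) = S.card := fun S => by simp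
    refine ⟨dpair, dpair_metric, 2*k, (fun _ => 1), 1, Finset.range (2*k),
      (fun i : Fin (2*k) => if (i : ℕ) = 0 then ({0,1} : Finset ℕ)
        else if (i : ℕ) = 1 then {1} else {(i : ℕ)}), fun p _ => le_refl 1, ?_, ?_⟩
    · intro j
      have hj := j.isLt
      dsimp only
      split_ifs with h1 h2
      · intro x hx
        simp only [Finset.mem_insert, Finset.mem_singleton] at hx
        exact Finset.mem_range.mpr (by omega)
      · intro x hx
        rw [Finset.mem_singleton] at hx
        exact Finset.mem_range.mpr (by omega)
      · intro x hx
        rw [Finset.mem_singleton] at hx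
        exact Finset.mem_range.mpr (by omega)
    · rw [kMedian_outcome k hk _ _ _ (unionP_pairs k hk), ← hE]
      refine ⟨S', ?_, ?_, ?_, ?_⟩
      · -- S' ⊆ range (2k)
        intro x hx
        rw [hmemS'] at hx
        rcases hx with rfl | ⟨hx, _⟩
        · exact Finset.mem_range.mpr (by omega)
        · obtain ⟨j, hj, rfl⟩ := (hmemE x).mp hx
          exact Finset.mem_range.mpr (by omega)
      · rw [hsum1, hsum1, hcardS', hcardE]
      · -- every agent weakly better
        intro i
        dsimp only
        by_cases h0 : (i : ℕ) = 0
        · rw [if_pos h0]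
          have hEI : E ∩ ({0,1} : Finset ℕ) = {0} := by
            ext z
            simp only [Finset.mem_inter, Finset.mem_insert, Finset.mem_singleton]
            constructor
            · rintro ⟨hz, rfl | rfl⟩
              · rfl
              · exact absurd hz h1E
            · rintro rfl; exact ⟨h0E, Or.inl rfl⟩
          have hSI : S' ∩ ({0,1} : Finset ℕ) = {1} := by
            ext z
            simp only [Finset.mem_inter, Finset.mem_insert, Finset.mem_singleton, hmemS']
            constructor
            · rintro ⟨hz, rfl | rfl⟩
              · rcases hz with h | ⟨_, h⟩ <;> omega
              · rfl
            · rintro rfl; exact ⟨Or.inl rfl, Or.inr rfl⟩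
          rw [hEI, hSI]
          simp
        · rw [if_neg h0]
          by_cases h1 : (i : ℕ) = 1
          · rw [if_pos h1]
            have hEI : E ∩ ({1} : Finset ℕ) = ∅ := by
              ext z
              simp only [Finset.mem_inter, Finset.mem_singleton, Finset.notMem_empty,
                iff_false, not_and]
              rintro hz rfl
              exact h1E hz
            rw [hEI]
            simp
          · rw [if_neg h1]
            have hEq : S' ∩ ({(i : ℕ)} : Finset ℕ) = E ∩ ({(i : ℕ)} : Finset ℕ) := by
              ext z
              simp only [Finset.mem_inter, Finset.mem_singleton, hmemS']
              constructor
              · rintro ⟨hz, rfl⟩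
                rcases hz with h | ⟨h, _⟩
                · exact absurd h h1
                · exact ⟨h, rfl⟩
              · rintro ⟨hz, rfl⟩
                exact ⟨Or.inr ⟨hz, h0⟩, rfl⟩
            rw [hEq]
      · -- agent 1 strictly better
        refine ⟨⟨1, by omega⟩, ?_⟩
        dsimp only
        norm_num
        have hEI : E ∩ ({1} : Finset ℕ) = ∅ := by
          ext z
          simp only [Finset.mem_inter, Finset.mem_singleton, Finset.notMem_empty,
            iff_false, not_and]
          rintro hz rfl
          exact h1E hz
        have hSI : S' ∩ ({1} : Finset ℕ) = {1} := by
          ext z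
          simp only [Finset.mem_inter, Finset.mem_singleton, hmemS']
          constructor
          · rintro ⟨_, rfl⟩; rfl
          · rintro rfl; exact ⟨Or.inl rfl, rfl⟩
        rw [hEI, hSI]
        simp

end PB
end

section
/- Under both the overlap preference model and the cost preference model, and for each of the three manipulation types (pessimistic, optimistic, anticipative): if a pair ⟨R, F⟩ of a shortlisting rule and an allocation rule is R-FSSP with respect to that manipulation type, then it is U-FSSP with respect to that manipulation type. -/
open Finset

namespace PB

open scoped Classical

/-- Under both preference models and for each manipulation type,
R-FSSP implies U-FSSP. -/
theorem rfssp_implies_ufssp :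
    ∀ U : PrefModel, (U = overlapU ∨ U = costU) →
    ∀ (R : ShortRule) (F : AllocRule),
      (R_FSSP_P U R F → U_FSSP_P U R F) ∧
      (R_FSSP_O U R F → U_FSSP_O U R F) ∧
      (R_FSSP_A U R F → U_FSSP_A U R F) := by
  intro U _ R F
  have hsub : ∀ (n : ℕ) (ℙ : Finset ℕ) (C P : Profile n), (∀ j, C j ⊆ ℙ) →
      (∀ j, P j ⊆ C j) → ∀ j, C j ∪ unionP P ⊆ ℙ := by
    intro n ℙ C P hC hP j
    exact Finset.union_subset (hC j)
      (Finset.sup_le fun k _ => (hP k).trans (hC k))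
  refine ⟨?_, ?_, ?_⟩ <;>
  · intro h n c B ℙ prefs C P i Pi' hc hord hC hP hPi'
    exact h n c B ℙ prefs (fun j => C j ∪ unionP P) P i Pi' hc hord
      (hsub n ℙ C P hC hP)
      (fun j => (hP j).trans Finset.subset_union_left) hPi'

end PB
end

section
/- Under both the overlap preference model and the cost preference model, no pair ⟨R, F⟩ consisting of a non-wasteful shortlisting rule R and an exhaustive allocation rule F is R-FSSP with respect to pessimistic manipulation (R-FSSP-P). -/
open Finset

namespace PB

open scoped Classical

/-- Auxiliary: cost function for the counterexample. -/
def cc : ℕ → ℕ := fun p => if p = 1 then 2 else 1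

lemma first_lt_eq {P : Finset ℕ} {p : ℕ} (hp : p ∈ P) (h : ∀ q ∈ P, q ≠ p → p < q) :
    first (· < ·) P = p := by
  have hex : ∃ p ∈ P, ∀ q ∈ P, q ≠ p → p < q := ⟨p, hp, h⟩
  rw [first, dif_pos hex]
  have h1 := hex.choose_spec.1
  have h2 := hex.choose_spec.2
  by_contra hne
  have hpa := h _ h1 hne
  have hb := h2 p hp (Ne.symm hne)
  omega

lemma greed_top : GREED cc 2 {1, 2} (· < ·) = {1} := by
  have e1 : first (· < ·) ({1, 2} : Finset ℕ) = 1 := first_lt_eq (by decide) (by decide)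
  have e2 : first (· < ·) ({2} : Finset ℕ) = 2 := first_lt_eq (by decide) (by decide)
  have hc : ({1, 2} : Finset ℕ).card = 2 := by decide
  have he1 : ({1, 2} : Finset ℕ).erase 1 = {2} := by decide
  have he2 : ({2} : Finset ℕ).erase 2 = ∅ := by decide
  rw [GREED, hc]
  rw [show (2 : ℕ) = 1 + 1 from rfl]
  rw [greedyAux]
  simp [e1, e2, he1, he2, greedyAux, cc]

lemma greed_tp : GREED cc 2 {0, 1, 2} (· < ·) = {0, 2} := by
  have e0 : first (· < ·) ({0, 1, 2} : Finset ℕ) = 0 := first_lt_eq (by decide) (by decide)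
  have e1 : first (· < ·) ({1, 2} : Finset ℕ) = 1 := first_lt_eq (by decide) (by decide)
  have e2 : first (· < ·) ({2} : Finset ℕ) = 2 := first_lt_eq (by decide) (by decide)
  have he0 : ({0, 1, 2} : Finset ℕ).erase 0 = {1, 2} := by decide
  have he1 : ({1, 2} : Finset ℕ).erase 1 = {2} := by decide
  have he2 : ({2} : Finset ℕ).erase 2 = ∅ := by decide
  have hc : ({0, 1, 2} : Finset ℕ).card = 3 := by decide
  rw [GREED, hc]
  rw [show (3 : ℕ) = 2 + 1 from rfl, greedyAux]
  simp only [e0, he0]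
  rw [show (2 : ℕ) = 1 + 1 from rfl, greedyAux]
  simp [e1, e2, he1, he2, greedyAux, cc]

lemma exh_full {c : ℕ → ℕ} {B : ℕ} {Sh A : Finset ℕ} (h : ExhaustiveAlloc c B Sh A)
    (hsum : Sh.sum c ≤ B) : A = Sh := by
  obtain ⟨hsub, -, hmax⟩ := h
  apply Finset.Subset.antisymm hsub
  intro p hp
  by_contra hpA
  apply hmax p hp hpA
  have hins : insert p A ⊆ Sh := Finset.insert_subset hp hsub
  have hle : (insert p A).sum c ≤ B :=
    le_trans (Finset.sum_le_sum_of_subset (f := c) hins) hsum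
  rw [Finset.sum_insert hpA] at hle
  have hle' : c p + A.sum c ≤ B := hle
  omega

lemma subset_pair {a b : ℕ} : ∀ {A : Finset ℕ}, A ⊆ {a, b} →
    A = ∅ ∨ A = {a} ∨ A = {b} ∨ A = {a, b} := by
  intro A h
  by_cases ha : a ∈ A <;> by_cases hb : b ∈ A
  · right; right; right
    apply Finset.Subset.antisymm h
    intro x hx
    simp only [Finset.mem_insert, Finset.mem_singleton] at hx
    rcases hx with rfl | rfl <;> assumption
  · right; left
    apply Finset.Subset.antisymm _ (by simpa using ha)
    intro x hx
    have hm := h hx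
    simp only [Finset.mem_insert, Finset.mem_singleton] at hm ⊢
    rcases hm with rfl | rfl
    · rfl
    · exact absurd hx hb
  · right; right; left
    apply Finset.Subset.antisymm _ (by simpa using hb)
    intro x hx
    have hm := h hx
    simp only [Finset.mem_insert, Finset.mem_singleton] at hm ⊢
    rcases hm with rfl | rfl
    · exact absurd hx ha
    · rfl
  · left
    ext x
    simp only [Finset.notMem_empty, iff_false]
    intro hx
    have hm := h hx
    simp only [Finset.mem_insert, Finset.mem_singleton] at hm
    rcases hm with rfl | rfl
    exacts [ha hx, hb hx]

lemma Tfam_mem_or_empty (𝔓 : Finset (Finset ℕ)) : Tfam 𝔓 ∈ 𝔓 ∨ Tfam 𝔓 = ∅ := by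
  rw [Tfam]
  split
  · next h => exact Or.inl h.choose_spec.1
  · exact Or.inr rfl

lemma reachable_subset {F : AllocRule} (hF : ExhaustiveRule F) {n : ℕ}
    {c : ℕ → ℕ} {B : ℕ} {Sh : Finset ℕ} {A : Profile n} {i : Fin n}
    (hA : ∀ j, A j ⊆ Sh) : ∀ Q ∈ reachable n c B F Sh A i, Q ⊆ Sh := by
  intro Q hQ
  simp only [reachable, Finset.mem_image] at hQ
  obtain ⟨b, hb, rfl⟩ := hQ
  refine (hF n c B Sh _ (fun j => ?_)).1
  rcases eq_or_ne j i with rfl | hj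
  · simpa using Finset.mem_powerset.mp hb
  · simpa [Function.update_of_ne hj] using hA j

lemma astar_subset (U : PrefModel) {F : AllocRule} (hF : ExhaustiveRule F) {n : ℕ}
    {c : ℕ → ℕ} {B : ℕ} {r : ℕ → ℕ → Prop} {Sh : Finset ℕ} {A : Profile n} {i : Fin n}
    (hA : ∀ j, A j ⊆ Sh) : Astar U n c B F r Sh A i ⊆ Sh := by
  rw [Astar]
  rcases Tfam_mem_or_empty ((reachable n c B F Sh A i).filter fun X =>
      ∀ Y ∈ reachable n c B F Sh A i, U c (GREED c B Sh r) Y ≤ U c (GREED c B Sh r) X) with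
    hmem | he
  · exact reachable_subset hF hA _ (Finset.mem_filter.mp hmem).1
  · rw [he]
    exact Finset.empty_subset _

lemma fstar_exh (U : PrefModel) {F : AllocRule} (hF : ExhaustiveRule F) {n : ℕ}
    {c : ℕ → ℕ} {B : ℕ} {r : ℕ → ℕ → Prop} {Sh : Finset ℕ} {A : Profile n} {i : Fin n}
    (hA : ∀ j, A j ⊆ Sh) : ExhaustiveAlloc c B Sh (Fstar U n c B F r Sh A i) := by
  apply hF
  intro j
  rcases eq_or_ne j i with rfl | hj
  · simpa using astar_subset U hF hA
  · simpa [Function.update_of_ne hj] using hA j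

lemma unionP_two (P : Profile 2) : unionP P = P 0 ∪ P 1 := by
  rw [unionP, show (Finset.univ : Finset (Fin 2)) = {0, 1} from by decide]
  simp [Finset.sup_insert, Finset.sup_singleton, Finset.sup_eq_union]
/-- Under both preference models, no pair of a non-wasteful
shortlisting rule and an exhaustive allocation rule is R-FSSP-P. -/
theorem no_nonWasteful_exhaustive_rfsspP :
    ∀ U : PrefModel, (U = overlapU ∨ U = costU) →
    ∀ (R : ShortRule) (F : AllocRule),
      IsShortRule R → NonWasteful R → ExhaustiveRule F → ¬ R_FSSP_P U R F := by
  intro U hU R F hR hNW hEx hFSSP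
  refine hFSSP 2 cc 2 {0, 1, 2} (fun _ => (· < ·)) ![{1, 2}, {0}] ![∅, {0}] 0 {2}
    (by decide) (fun _ => inferInstance) (by decide) (by decide) (by decide) ?_
  have hup : Function.update (![∅, {0}] : Profile 2) 0
      (GREED cc 2 ((![{1, 2}, {0}] : Profile 2) 0) ((fun _ : Fin 2 => ((· < ·) : ℕ → ℕ → Prop)) 0))
      = ![{1}, {0}] := by
    funext j
    fin_cases j
    · simpa using greed_top
    · simp
  rw [hup]
  have greed_tp' : GREED cc 2 {0, 1, 2} ((fun _ : Fin 2 => ((· < ·) : ℕ → ℕ → Prop)) 0)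
      = {0, 2} := greed_tp
  have hPb : ∀ j : Fin 2, (![{1}, {0}] : Profile 2) j ⊆ ({0, 1, 2} : Finset ℕ) := by decide
  have hP2 : Function.update (![{1}, {0}] : Profile 2) 0 {2} = ![{2}, {0}] := by
    funext j
    fin_cases j <;> simp
  have hu1 : unionP (![{1}, {0}] : Profile 2) = {0, 1} := by rw [unionP_two]; decide
  have hu2 : unionP (![{2}, {0}] : Profile 2) = {0, 2} := by rw [unionP_two]; decide
  have hP2b : ∀ j : Fin 2, (![{2}, {0}] : Profile 2) j ⊆ ({0, 1, 2} : Finset ℕ) := by decide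
  have hSh' : R 2 cc 2 {0, 1, 2} (Function.update (![{1}, {0}] : Profile 2) 0 {2}) = {0, 2} := by
    rw [hP2]
    have hsub := hR 2 cc 2 {0, 1, 2} ![{2}, {0}] hP2b
    rw [hu2] at hsub
    rcases hNW 2 cc 2 {0, 1, 2} ![{2}, {0}] (by decide) hP2b with hs | hs
    · rcases subset_pair hsub with h | h | h | h
      · exfalso; rw [h] at hs; revert hs; decide
      · exfalso; rw [h] at hs; revert hs; decide
      · exfalso; rw [h] at hs; revert hs; decide
      · exact h
    · exact hs.trans hu2
  have hSh : R 2 cc 2 {0, 1, 2} ![{1}, {0}] = {1} ∨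
      R 2 cc 2 {0, 1, 2} ![{1}, {0}] = {0, 1} := by
    have hsub := hR 2 cc 2 {0, 1, 2} ![{1}, {0}] hPb
    rw [hu1] at hsub
    rcases hNW 2 cc 2 {0, 1, 2} ![{1}, {0}] (by decide) hPb with hs | hs
    · rcases subset_pair hsub with h | h | h | h
      · exfalso; rw [h] at hs; revert hs; decide
      · exfalso; rw [h] at hs; revert hs; decide
      · exact Or.inl h
      · exact Or.inr h
    · exact Or.inr (hs.trans hu1)
  have hvB : ∀ (r : ℕ → ℕ → Prop) (A' : Profile 2), (∀ j, A' j ⊆ ({0, 2} : Finset ℕ)) →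
      Fstar U 2 cc 2 F r ({0, 2} : Finset ℕ) A' 0 = {0, 2} := fun r A' h =>
    exh_full (fstar_exh U hEx (c := cc) (B := 2) (r := r) h)
      (by decide : ({0, 2} : Finset ℕ).sum cc ≤ 2)
  have hvA : ∀ (r : ℕ → ℕ → Prop) (Sh : Finset ℕ), (Sh = {1} ∨ Sh = {0, 1}) →
      ∀ A : Profile 2, (∀ j, A j ⊆ Sh) →
      U cc {0, 2} (Fstar U 2 cc 2 F r Sh A 0) ≤ 1 := by
    intro r Sh hs A hA
    have hexh := fstar_exh U hEx (c := cc) (B := 2) (r := r) (i := 0) hA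
    rcases hs with rfl | rfl
    · rw [exh_full hexh (by decide : ({1} : Finset ℕ).sum cc ≤ 2)]
      rcases hU with rfl | rfl <;> decide
    · have hcase : Fstar U 2 cc 2 F r ({0, 1} : Finset ℕ) A 0 = {0}
          ∨ Fstar U 2 cc 2 F r ({0, 1} : Finset ℕ) A 0 = {1} := by
        obtain ⟨hsub, hfe, hmax⟩ := hexh
        rcases subset_pair hsub with h | h | h | h
        · exact absurd (by rw [h]; decide) (hmax 0 (by decide) (by rw [h]; decide))
        · exact Or.inl h
        · exact Or.inr h
        · exfalso; rw [h] at hfe; revert hfe; decide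
      rcases hcase with h | h <;> rw [h] <;> rcases hU with rfl | rfl <;> decide
  refine ⟨fun A A' hA hA' => ?_, ?_⟩
  · rw [hSh'] at hA' ⊢
    rcases hSh with h1 | h1 <;> rw [h1] at hA ⊢
    · rw [show ({1} : Finset ℕ) ∪ {0, 2} = {0, 1, 2} from by decide, greed_tp', hvB _ A' hA']
      refine le_trans (hvA _ _ (Or.inl rfl) A hA) ?_
      rcases hU with rfl | rfl <;> decide
    · rw [show ({0, 1} : Finset ℕ) ∪ {0, 2} = {0, 1, 2} from by decide, greed_tp', hvB _ A' hA']
      refine le_trans (hvA _ _ (Or.inr rfl) A hA) ?_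
      rcases hU with rfl | rfl <;> decide
  · refine ⟨fun _ => ∅, fun _ => ∅, fun j => Finset.empty_subset _,
      fun j => Finset.empty_subset _, ?_⟩
    rw [hSh']
    rcases hSh with h1 | h1 <;> rw [h1]
    · rw [show ({1} : Finset ℕ) ∪ {0, 2} = {0, 1, 2} from by decide, greed_tp',
        hvB _ _ (fun j => Finset.empty_subset _)]
      refine lt_of_le_of_lt (hvA _ _ (Or.inl rfl) _ (fun j => Finset.empty_subset _)) ?_
      rcases hU with rfl | rfl <;> decide
    · rw [show ({0, 1} : Finset ℕ) ∪ {0, 2} = {0, 1, 2} from by decide, greed_tp',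
        hvB _ _ (fun j => Finset.empty_subset _)]
      refine lt_of_le_of_lt (hvA _ _ (Or.inr rfl) _ (fun j => Finset.empty_subset _)) ?_
      rcases hU with rfl | rfl <;> decide

end PB
end

section
/- The approval-maximising rule (with the canonical lexicographic tie-breaking rule T) is strategyproof over the class of unit-cost allocation instances, under both the cost preference model and the overlap preference model: for every allocation instance I = ⟨𝒫, c, B⟩ in which all projects have equal cost, every approval profile A, and every agent i, F(I, (A_{-i}, top_i(𝒫))) ⪰_{top_i(𝒫)} F(I, A), where F is the approval-maximising rule. -/
open Finset

namespace PB

open scoped Classical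

lemma Tfam_spec {𝔓 : Finset (Finset ℕ)} (h𝔓 : 𝔓.Nonempty) :
    Tfam 𝔓 ∈ 𝔓 ∧ ∀ Q ∈ 𝔓, enc Q ≤ enc (Tfam 𝔓) := by
  obtain ⟨P, hP, hmax⟩ := Finset.exists_max_image 𝔓 enc h𝔓
  have h : ∃ P ∈ 𝔓, ∀ Q ∈ 𝔓, enc Q ≤ enc P := ⟨P, hP, hmax⟩
  rw [Tfam, dif_pos h]
  exact h.choose_spec

lemma approvalMax_spec (n : ℕ) (c : ℕ → ℕ) (B : ℕ) (Sh : Finset ℕ) (A : Profile n) :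
    approvalMax n c B Sh A ⊆ Sh ∧ (approvalMax n c B Sh A).sum c ≤ B ∧
    (∀ S' ⊆ Sh, S'.sum c ≤ B →
      S'.sum (appScore A) ≤ (approvalMax n c B Sh A).sum (appScore A)) ∧
    (∀ S' ⊆ Sh, S'.sum c ≤ B →
      (approvalMax n c B Sh A).sum (appScore A) ≤ S'.sum (appScore A) →
      enc S' ≤ enc (approvalMax n c B Sh A)) := by
  classical
  unfold approvalMax
  have hne : ((Sh.powerset).filter fun S =>
      S.sum c ≤ B ∧ ∀ S' ∈ Sh.powerset, S'.sum c ≤ B →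
        S'.sum (appScore A) ≤ S.sum (appScore A)).Nonempty := by
    obtain ⟨S₀, hS₀, hmax⟩ := Finset.exists_max_image
      (Sh.powerset.filter fun S => S.sum c ≤ B) (fun S => S.sum (appScore A))
      ⟨∅, by simp⟩
    obtain ⟨hS₀p, hS₀f⟩ := Finset.mem_filter.1 hS₀
    refine ⟨S₀, Finset.mem_filter.2 ⟨hS₀p, hS₀f, fun S' h1 h2 =>
      hmax S' (Finset.mem_filter.2 ⟨h1, h2⟩)⟩⟩
  obtain ⟨hmem, hti⟩ := Tfam_spec hne
  obtain ⟨hpow, hfeas, hmax⟩ := Finset.mem_filter.1 hmem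
  have hsub := Finset.mem_powerset.1 hpow
  refine ⟨hsub, hfeas, fun S' h1 h2 => hmax S' (Finset.mem_powerset.2 h1) h2, ?_⟩
  intro S' h1 h2 h3
  apply hti
  refine Finset.mem_filter.2 ⟨Finset.mem_powerset.2 h1, h2, fun S'' h1' h2' =>
    le_trans (hmax S'' h1' h2') h3⟩

lemma appScore_update {n : ℕ} (A : Profile n) (i : Fin n) (b : Finset ℕ) (x : ℕ) :
    appScore (Function.update A i b) x
      = ((Finset.univ.erase i).filter fun j => x ∈ A j).card
        + (if x ∈ b then 1 else 0) := by
  classical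
  unfold appScore
  have huniv : (Finset.univ : Finset (Fin n)) = insert i (Finset.univ.erase i) :=
    (Finset.insert_erase (Finset.mem_univ i)).symm
  conv_lhs => rw [huniv]
  rw [Finset.filter_insert]
  have hcong : ((Finset.univ.erase i).filter fun j => x ∈ Function.update A i b j)
      = ((Finset.univ.erase i).filter fun j => x ∈ A j) := by
    apply Finset.filter_congr
    intro j hj
    rw [Function.update_of_ne (Finset.ne_of_mem_erase hj)]
  rw [Function.update_self]
  split_ifs with h
  · rw [Finset.card_insert_of_notMem (by simp), hcong]
  · rw [hcong, Nat.add_zero]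

lemma appScore_self {n : ℕ} (A : Profile n) (i : Fin n) (x : ℕ) :
    appScore A x
      = ((Finset.univ.erase i).filter fun j => x ∈ A j).card
        + (if x ∈ A i then 1 else 0) := by
  have := appScore_update A i (A i) x
  rwa [Function.update_eq_self] at this

lemma enc_insert_erase (S : Finset ℕ) (p q : ℕ) (hq : q ∈ S) (hp : p ∉ S) :
    enc (insert p (S.erase q)) = enc S + (1 / 2 : ℚ) ^ p - (1 / 2 : ℚ) ^ q := by
  classical
  have hp' : p ∉ S.erase q := fun h => hp (Finset.mem_of_mem_erase h)
  unfold enc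
  rw [Finset.sum_insert hp']
  have h2 : ((1 / 2 : ℚ) ^ q + ∑ x ∈ S.erase q, (1 / 2 : ℚ) ^ x)
      = ∑ x ∈ S, (1 / 2 : ℚ) ^ x := Finset.add_sum_erase S _ hq
  linarith

lemma key_abstract {n : ℕ} (c : ℕ → ℕ) (B : ℕ) (Sh : Finset ℕ) (A : Profile n)
    (i : Fin n) (T : Finset ℕ) (W W' : Finset ℕ)
    (hc : ∀ p ∈ Sh, ∀ q ∈ Sh, c p = c q)
    (hWsub : W ⊆ Sh) (hWfeas : W.sum c ≤ B)
    (hWmax : ∀ S' ⊆ Sh, S'.sum c ≤ B → S'.sum (appScore A) ≤ W.sum (appScore A))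
    (hWtie : ∀ S' ⊆ Sh, S'.sum c ≤ B →
      W.sum (appScore A) ≤ S'.sum (appScore A) → enc S' ≤ enc W)
    (hW'sub : W' ⊆ Sh) (hW'feas : W'.sum c ≤ B)
    (hW'max : ∀ S' ⊆ Sh, S'.sum c ≤ B →
      S'.sum (appScore (Function.update A i T)) ≤ W'.sum (appScore (Function.update A i T)))
    (hW'tie : ∀ S' ⊆ Sh, S'.sum c ≤ B →
      W'.sum (appScore (Function.update A i T)) ≤ S'.sum (appScore (Function.update A i T)) →
      enc S' ≤ enc W') :
    (W ∩ T).card ≤ (W' ∩ T).card := by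
  classical
  set A' := Function.update A i T with hA'def
  by_contra hlt
  push_neg at hlt
  -- find p ∈ (W ∩ T) \ W'
  obtain ⟨p, hpWT, hpW'⟩ : ∃ p, p ∈ W ∩ T ∧ p ∉ W' := by
    by_contra h; push_neg at h
    have hsub : W ∩ T ⊆ W' ∩ T := fun x hx =>
      Finset.mem_inter.2 ⟨h x hx, (Finset.mem_inter.1 hx).2⟩
    have := Finset.card_le_card hsub
    omega
  have hpW : p ∈ W := (Finset.mem_inter.1 hpWT).1
  have hpT : p ∈ T := (Finset.mem_inter.1 hpWT).2
  have hpSh : p ∈ Sh := hWsub hpW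
  -- score decomposition
  set s : ℕ → ℕ := fun x => ((Finset.univ.erase i).filter fun j => x ∈ A j).card with hsdef
  have hsc' : ∀ x, appScore A' x = s x + (if x ∈ T then 1 else 0) := fun x =>
    appScore_update A i T x
  have hsc : ∀ x, appScore A x = s x + (if x ∈ A i then 1 else 0) := fun x =>
    appScore_self A i x
  by_cases hfin : W'.sum c + c p ≤ B
  · -- adding p is feasible: contradicts maximality of W'
    have hmem : insert p W' ⊆ Sh := Finset.insert_subset hpSh hW'sub
    have hfeas : (insert p W').sum c ≤ B := by
      rw [Finset.sum_insert hpW']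
      have hb : ∑ x ∈ W', c x = W'.sum c := rfl
      omega
    have hle := hW'max _ hmem hfeas
    rw [Finset.sum_insert hpW'] at hle
    have hb : ∑ x ∈ W', appScore A' x = W'.sum (appScore A') := rfl
    have hscp : appScore A' p = s p + 1 := by rw [hsc' p, if_pos hpT]
    omega
  · -- W' is "full": swap argument
    push_neg at hfin
    have hγpos : 0 < c p := by
      by_contra h
      push_neg at h
      have hcp : c p = 0 := by omega
      have hz : W'.sum c = 0 := Finset.sum_eq_zero fun x hx => by
        rw [hc x (hW'sub hx) p hpSh, hcp]
      omega
    have hsumW : W.sum c = W.card * c p := by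
      rw [Finset.sum_congr rfl fun x hx => hc x (hWsub hx) p hpSh,
        Finset.sum_const, smul_eq_mul]
    have hsumW' : W'.sum c = W'.card * c p := by
      rw [Finset.sum_congr rfl fun x hx => hc x (hW'sub hx) p hpSh,
        Finset.sum_const, smul_eq_mul]
    have hcardle : W.card ≤ W'.card := by
      have h1 : W.card * c p ≤ B := hsumW ▸ hWfeas
      have h2 : B < (W'.card + 1) * c p := by
        rw [add_mul, one_mul, ← hsumW']; exact hfin
      have h3 := lt_of_le_of_lt h1 h2
      exact Nat.lt_succ_iff.1 (lt_of_mul_lt_mul_right h3 (Nat.zero_le _))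
    -- find q ∈ W' outside T ∪ W
    have hcount : (W' ∩ (T ∪ W)).card < W'.card := by
      have hsub1 : W' ∩ (T ∪ W) ⊆ (W' ∩ T) ∪ (W \ T) := by
        intro x hx
        simp only [Finset.mem_inter, Finset.mem_union, Finset.mem_sdiff] at hx ⊢
        tauto
      have h1 := Finset.card_le_card hsub1
      have h2 := Finset.card_union_le (W' ∩ T) (W \ T)
      have h3 : (W ∩ T).card + (W \ T).card = W.card :=
        Finset.card_inter_add_card_sdiff W T
      omega
    obtain ⟨q, hqW', hq⟩ : ∃ q ∈ W', q ∉ T ∪ W := by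
      by_contra h; push_neg at h
      have hsub2 : W' ⊆ W' ∩ (T ∪ W) := fun x hx =>
        Finset.mem_inter.2 ⟨hx, h x hx⟩
      have := Finset.card_le_card hsub2
      omega
    have hqT : q ∉ T := fun h => hq (Finset.mem_union_left _ h)
    have hqW : q ∉ W := fun h => hq (Finset.mem_union_right _ h)
    have hqSh : q ∈ Sh := hW'sub hqW'
    have hpq : p ≠ q := fun h => hqT (h ▸ hpT)
    have hcpq : c p = c q := hc p hpSh q hqSh
    -- swap in W'
    have hpnotin : p ∉ W'.erase q := fun h => hpW' (Finset.mem_of_mem_erase h)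
    have hW''sub : insert p (W'.erase q) ⊆ Sh :=
      Finset.insert_subset hpSh ((Finset.erase_subset _ _).trans hW'sub)
    have hW''cost : (insert p (W'.erase q)).sum c = W'.sum c := by
      rw [Finset.sum_insert hpnotin]
      have h1 : c q + ∑ x ∈ W'.erase q, c x = W'.sum c :=
        Finset.add_sum_erase W' c hqW'
      omega
    have hW''score : (insert p (W'.erase q)).sum (appScore A')
        = appScore A' p + (W'.erase q).sum (appScore A') :=
      Finset.sum_insert hpnotin
    have hW'score : appScore A' q + (W'.erase q).sum (appScore A')
        = W'.sum (appScore A') := Finset.add_sum_erase W' _ hqW'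
    have hle1 := hW'max _ hW''sub (hW''cost ▸ hW'feas)
    have hsq1 : appScore A' p ≤ appScore A' q := by omega
    have hscp : appScore A' p = s p + 1 := by rw [hsc' p, if_pos hpT]
    have hscq : appScore A' q = s q := by rw [hsc' q, if_neg hqT, Nat.add_zero]
    -- swap in W
    have hqnotin : q ∉ W.erase p := fun h => hqW (Finset.mem_of_mem_erase h)
    have hW3sub : insert q (W.erase p) ⊆ Sh :=
      Finset.insert_subset hqSh ((Finset.erase_subset _ _).trans hWsub)
    have hW3cost : (insert q (W.erase p)).sum c = W.sum c := by
      rw [Finset.sum_insert hqnotin]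
      have h1 : c p + ∑ x ∈ W.erase p, c x = W.sum c :=
        Finset.add_sum_erase W c hpW
      omega
    have hW3score : (insert q (W.erase p)).sum (appScore A)
        = appScore A q + (W.erase p).sum (appScore A) :=
      Finset.sum_insert hqnotin
    have hWscore : appScore A p + (W.erase p).sum (appScore A)
        = W.sum (appScore A) := Finset.add_sum_erase W _ hpW
    have hle2 := hWmax _ hW3sub (hW3cost ▸ hWfeas)
    have hsq2 : appScore A q ≤ appScore A p := by omega
    have hap : (if p ∈ A i then 1 else 0) ≤ 1 := by split_ifs <;> omega
    have hscp2 : appScore A p = s p + (if p ∈ A i then 1 else 0) := hsc p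
    have hscq2 : appScore A q = s q + (if q ∈ A i then 1 else 0) := hsc q
    -- all scores tied
    have heq1 : appScore A' p = appScore A' q := by omega
    have heq2 : appScore A p = appScore A q := by omega
    -- tie-breaking contradiction
    have henc1 : enc (insert p (W'.erase q)) ≤ enc W' := by
      apply hW'tie _ hW''sub (hW''cost ▸ hW'feas)
      omega
    have henc2 : enc (insert q (W.erase p)) ≤ enc W := by
      apply hWtie _ hW3sub (hW3cost ▸ hWfeas)
      omega
    rw [enc_insert_erase W' p q hqW' hpW'] at henc1
    rw [enc_insert_erase W q p hpW hqW] at henc2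
    have hple : (1 / 2 : ℚ) ^ p ≤ (1 / 2 : ℚ) ^ q := by linarith
    have hqle : (1 / 2 : ℚ) ^ q ≤ (1 / 2 : ℚ) ^ p := by linarith
    rcases Nat.lt_trichotomy p q with h | h | h
    · have : (1 / 2 : ℚ) ^ q < (1 / 2 : ℚ) ^ p :=
        pow_lt_pow_right_of_lt_one₀ (by norm_num) (by norm_num) h
      linarith
    · exact hpq h
    · have : (1 / 2 : ℚ) ^ p < (1 / 2 : ℚ) ^ q :=
        pow_lt_pow_right_of_lt_one₀ (by norm_num) (by norm_num) h
      linarith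

lemma key_card {n : ℕ} (c : ℕ → ℕ) (B : ℕ) (Sh : Finset ℕ) (A : Profile n)
    (i : Fin n) (T : Finset ℕ) (hc : ∀ p ∈ Sh, ∀ q ∈ Sh, c p = c q) :
    ((approvalMax n c B Sh A) ∩ T).card
      ≤ ((approvalMax n c B Sh (Function.update A i T)) ∩ T).card := by
  obtain ⟨hWsub, hWfeas, hWmax, hWtie⟩ := approvalMax_spec n c B Sh A
  obtain ⟨hW'sub, hW'feas, hW'max, hW'tie⟩ :=
    approvalMax_spec n c B Sh (Function.update A i T)
  exact key_abstract c B Sh A i T _ _ hc hWsub hWfeas hWmax hWtie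
    hW'sub hW'feas hW'max hW'tie


/-- The approval-maximising rule (canonical tie-breaking) is
strategyproof over unit-cost instances, under both preference models. -/
theorem approvalMax_SP_unit :
    ∀ U : PrefModel, (U = overlapU ∨ U = costU) →
    ∀ (n : ℕ) (c : ℕ → ℕ) (B : ℕ) (Sh : Finset ℕ) (A : Profile n)
      (ri : ℕ → ℕ → Prop) (i : Fin n),
      (∀ p ∈ Sh, c p ≤ B) → (∀ p ∈ Sh, ∀ q ∈ Sh, c p = c q) →
      IsStrictTotalOrder ℕ ri → (∀ j, A j ⊆ Sh) →
      U c (GREED c B Sh ri) (approvalMax n c B Sh A) ≤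
        U c (GREED c B Sh ri) (approvalMax n c B Sh (Function.update A i (GREED c B Sh ri))) := by
  intro U hU n c B Sh A ri i _hcB hc _hsto _hA
  set T := GREED c B Sh ri with hTdef
  have hkey := key_card c B Sh A i T hc
  have hWsub := (approvalMax_spec n c B Sh A).1
  have hW'sub := (approvalMax_spec n c B Sh (Function.update A i T)).1
  rcases hU with rfl | rfl
  · exact hkey
  · simp only [costU]
    rcases Finset.eq_empty_or_nonempty Sh with h | ⟨p0, hp0⟩
    · have hW : approvalMax n c B Sh A = ∅ :=
        Finset.subset_empty.1 (hWsub.trans (le_of_eq h))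
      simp [hW]
    · have e : ∀ S : Finset ℕ, S ⊆ Sh →
          (S ∩ T).sum c = (S ∩ T).card * c p0 := by
        intro S hS
        rw [Finset.sum_congr rfl fun x hx =>
          hc x (hS (Finset.mem_inter.1 hx).1) p0 hp0, Finset.sum_const,
          smul_eq_mul]
      rw [e _ hWsub, e _ hW'sub]
      exact Nat.mul_le_mul_right _ hkey

end PB
end
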